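/- Let T* ⊆ T and suppose Π(t) ∩ Π(t') has full dimension for every t, t' ∈ T*. If the menu c : T* → ℝ^S is incentive compatible for T*, then c(t) = c(t') for all t, t' ∈ T*. -/
import Mathlib


noncomputable section

/-- Euclidean inner product on ℝ^S. -/
def dotp {S : Type*} [Fintype S] (x y : S → ℝ) : ℝ := ∑ s, x s * y s

/-- A set `A ⊆ ℝ^S` has full dimension if the only vector orthogonal to all of `A` is `0`. -/
def FullDim {S : Type*} [Fintype S] (A : Set (S → ℝ)) : Prop :=
  ∀ x : S → ℝ, (∀ a ∈ A, dotp a x = 0) → x = 0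

theorem stmt_8 {S T : Type*} [Fintype S] [Fintype T] [Nonempty S] [Nonempty T]
    (P : T → Set (S → ℝ))
    (hne : ∀ t, (P t).Nonempty) (hcl : ∀ t, IsClosed (P t))
    (hcv : ∀ t, Convex ℝ (P t)) (hsub : ∀ t, P t ⊆ stdSimplex ℝ S)
    (Ts : Set T)
    (hov : ∀ t ∈ Ts, ∀ t' ∈ Ts, FullDim (P t ∩ P t'))
    (c : T → (S → ℝ))
    (hic : ∀ t ∈ Ts, ∀ s ∈ Ts, ∀ π ∈ P t, dotp π (c t) ≤ dotp π (c s)) :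
    ∀ t ∈ Ts, ∀ t' ∈ Ts, c t = c t' := by
  intro t ht t' ht'
  have h := hov t ht t' ht' (c t - c t') ?_
  · have := sub_eq_zero.mp h
    exact this
  · intro a ha
    have h1 := hic t ht t' ht' a ha.1
    have h2 := hic t' ht' t ht a ha.2
    have heq : dotp a (c t) = dotp a (c t') := le_antisymm h1 h2
    simp only [dotp, Pi.sub_apply, mul_sub, Finset.sum_sub_distrib]
    rw [show (∑ s, a s * c t s) = dotp a (c t) from rfl,
        show (∑ s, a s * c t' s) = dotp a (c t') from rfl, heq, sub_self]
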